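/- arXiv:1312.5932 — 2 statements merged into one kernel-verified Lean document; each statement's English description precedes it below -/
import Mathlib

section
/- Let 𝒜 = {A_m} be a strictly convergent (A,I)-pre-Weierstrass system and let σ be an analytic 𝒜-structure on a valued field K whose valuation ring is henselian. For f = Σ_μ a_μ ξ^μ ∈ A_m, if σ_0(a_μ) = 0 for every μ ∈ ℕ^m, then σ_m(f) = 0, i.e. σ_m(f) is the zero function on (K°)^m. Consequently, σ_m factors through the image of the A-algebra homomorphism 𝒮^σ : A_m → K°[[ξ]] sending f to Σ_μ σ_0(a_μ)ξ^μ. -/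
noncomputable section
open scoped Classical
open MvPowerSeries

namespace SCW

variable {A : Type*} [CommRing A]

/-- `f` involves only the variables `ξ_1, …, ξ_m`, i.e. those with index `< m`. -/
def VarsBelow (m : ℕ) (f : MvPowerSeries ℕ A) : Prop :=
  ∀ d : ℕ →₀ ℕ, (∃ i ∈ d.support, m ≤ i) → MvPowerSeries.coeff (R := A) d f = 0

/-- The coefficient series `f̄_μ` of `(ξ'')^μ` when `f` is written as a series in the
variables of index `≥ m` with coefficients that are series in the variables of index `< m`. -/
def sliceA (m : ℕ) (μ : ℕ →₀ ℕ) (f : MvPowerSeries ℕ A) : MvPowerSeries ℕ A :=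
  fun d => if (∀ i ∈ d.support, i < m) then MvPowerSeries.coeff (R := A) (d + μ) f else 0

/-- The action of a permutation of the variables on a power series. -/
def permuteA (e : Equiv.Perm ℕ) (f : MvPowerSeries ℕ A) : MvPowerSeries ℕ A :=
  fun d => MvPowerSeries.coeff (R := A) (Finsupp.equivMapDomain e d) f

/-- Coefficientwise reduction modulo the ideal `I`. -/
def red (I : Ideal A) : MvPowerSeries ℕ A → MvPowerSeries ℕ (A ⧸ I) :=
  MvPowerSeries.map (σ := ℕ) (Ideal.Quotient.mk I)

/-- `f` is (equal to) a polynomial in the variables of index `< m`. -/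
def IsPolyBelow {R : Type*} [CommRing R] (m : ℕ) (f : MvPowerSeries ℕ R) : Prop :=
  ∃ p : MvPolynomial ℕ R, (∀ i ∈ p.vars, i < m) ∧ f = ↑p

/-- A family `{A_m}` of subalgebras `A[ξ_1,…,ξ_m] ⊆ A_m ⊆ A_{m'} ⊆ A[[ξ_1,…,ξ_{m'}]]`
(`m ≤ m'`), closed under permutations of the variables, satisfying condition (*)
(coefficients of `f ∈ A_{m'}` as a series in `ξ_{m+1},…,ξ_{m'}` lie in `A_m`) and condition (**)
(the image of `A_m` under reduction mod `I` is the polynomial ring `(A/I)[ξ_1,…,ξ_m]`). -/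
structure SCFamily (A : Type u) [CommRing A] (I : Ideal A) : Type u where
  Am : ℕ → Subalgebra A (MvPowerSeries ℕ A)
  mono : ∀ {m m' : ℕ}, m ≤ m' → Am m ≤ Am m'
  varsBelow : ∀ m, ∀ f ∈ Am m, VarsBelow m f
  poly_mem : ∀ m (p : MvPolynomial ℕ A), (∀ i ∈ p.vars, i < m) →
    (↑p : MvPowerSeries ℕ A) ∈ Am m
  perm_closed : ∀ m (e : Equiv.Perm ℕ), (∀ i, m ≤ i → e i = i) →
    ∀ f ∈ Am m, permuteA e f ∈ Am m
  slice_mem : ∀ {m m' : ℕ}, m ≤ m' → ∀ μ : ℕ →₀ ℕ, (∀ i ∈ μ.support, m ≤ i) →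
    ∀ f ∈ Am m', sliceA m μ f ∈ Am m
  red_poly : ∀ m, ∀ f ∈ Am m, IsPolyBelow m (red I f)
  poly_lift : ∀ m (q : MvPolynomial ℕ (A ⧸ I)), (∀ i ∈ q.vars, i < m) →
    ∃ f ∈ Am m, red I f = ↑q

/-- `f ∈ A[[ξ_1,…,ξ_m]]` is regular in `ξ_m` of degree `d`: its reduction `f̃` mod `I` is a
monic polynomial in `ξ_m` of degree `d` with coefficients in `(A/I)[ξ_1,…,ξ_{m-1}]`. -/
def SCRegular (I : Ideal A) (m d : ℕ) (f : MvPowerSeries ℕ A) : Prop :=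
  ∃ c : Fin d → MvPolynomial ℕ (A ⧸ I), (∀ i, ∀ j ∈ (c i).vars, j < m - 1) ∧
    red I f = ↑((MvPolynomial.X (m - 1) : MvPolynomial ℕ (A ⧸ I)) ^ d
      + ∑ i : Fin d, c i * (MvPolynomial.X (m - 1)) ^ (i : ℕ))

/-- Weierstrass preparation for the family `{A_m}`: every `f ∈ A_m` regular in `ξ_m` of
degree `d` factors uniquely as a unit of `A_m` times a monic (Weierstrass) polynomial of degree
`d` in `ξ_m` with lower coefficients in `A_{m-1}`. -/
def HasWP {A : Type u} [CommRing A] {I : Ideal A} (𝒜 : SCFamily A I) : Prop :=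
  ∀ d m : ℕ, 1 ≤ m → ∀ f ∈ 𝒜.Am m, SCRegular I m d f →
    ∃! ur : MvPowerSeries ℕ A × (Fin d → MvPowerSeries ℕ A),
      ur.1 ∈ 𝒜.Am m ∧ (∃ v ∈ 𝒜.Am m, ur.1 * v = 1) ∧ (∀ i, ur.2 i ∈ 𝒜.Am (m - 1)) ∧
      f = ur.1 * ((MvPowerSeries.X (m - 1)) ^ d
        + ∑ i : Fin d, ur.2 i * (MvPowerSeries.X (m - 1)) ^ (i : ℕ))


/-- An analytic `𝒜`-structure on a valued field `L` with valuation ring `O`: a system of ring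
homomorphisms `σ_m : A_m → Fun((O)^m, O)` with `I ⊆ σ_0⁻¹(L°°)`, sending `ξ_i` to the `i`-th
coordinate function, with `σ_{m+1}` extending `σ_m`. -/
structure AnalyticStructure {A : Type u} [CommRing A] (I : Ideal A)
    (Am : ℕ → Subalgebra A (MvPowerSeries ℕ A))
    (L : Type v) [Field L] (O : ValuationSubring L) : Type (max u v) where
  σ : (m : ℕ) → ↥(Am m) →+* ((Fin m → ↥O) → ↥O)
  cond1 : ∀ a ∈ I, ∀ (h : (MvPowerSeries.C (σ := ℕ) (R := A) a) ∈ Am 0) (x : Fin 0 → ↥O),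
    σ 0 ⟨MvPowerSeries.C (σ := ℕ) (R := A) a, h⟩ x ∈ IsLocalRing.maximalIdeal ↥O
  cond2 : ∀ (m i : ℕ) (hi : i < m) (h : (MvPowerSeries.X i : MvPowerSeries ℕ A) ∈ Am m)
      (x : Fin m → ↥O), σ m ⟨MvPowerSeries.X i, h⟩ x = x ⟨i, hi⟩
  cond3 : ∀ (m : ℕ) (f : MvPowerSeries ℕ A) (hf : f ∈ Am m) (hf' : f ∈ Am (m + 1))
      (x : Fin (m + 1) → ↥O), σ (m + 1) ⟨f, hf'⟩ x = σ m ⟨f, hf⟩ (x ∘ Fin.castSucc)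

/-- A strictly convergent `(A,I)`-pre-Weierstrass system: a system `{A_m}` (conditions
(i)–(v)), together with Weierstrass preparation (vi), the weak Noetherian property (vii),
and the faithfulness condition (viii). -/
structure SCPreWS (A : Type u) [CommRing A] (I : Ideal A) extends SCFamily A I where
  wprep : HasWP toSCFamily
  wnp : ∀ m, ∀ f ∈ Am m, ∃ J : Finset (ℕ →₀ ℕ), ∃ g : (ℕ →₀ ℕ) → MvPowerSeries ℕ A,
    (∀ μ ∈ J, g μ ∈ Am m ∧ red I (g μ) = 0) ∧
    f = ∑ μ ∈ J, (MvPowerSeries.monomial (R := A) μ (MvPowerSeries.coeff (R := A) μ f)) * (1 + g μ)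
  faithful : ∀ a : A,
    (∀ (L : Type u) [Field L] (O : ValuationSubring L)
      (τ : AnalyticStructure I Am L O) (h : MvPowerSeries.C (σ := ℕ) (R := A) a ∈ Am 0),
      τ.σ 0 ⟨MvPowerSeries.C (σ := ℕ) (R := A) a, h⟩ = 0) → a = 0

/-- `f` lies in the ideal of the subring (with underlying set `T`) generated by the set `S`:
it is a finite combination `Σ cᵢ·gᵢ` with `cᵢ ∈ T` and `gᵢ ∈ S`. -/
def memSpan {R : Type*} [CommRing R] (T S : Set R) (f : R) : Prop :=
  ∃ (k : ℕ) (c g : Fin k → R), (∀ i, c i ∈ T) ∧ (∀ i, g i ∈ S) ∧ f = ∑ i, c i * g i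

/-- The set of constant power series with constant in `I`. -/
def constsOf {A : Type*} [CommRing A] (I : Ideal A) : Set (MvPowerSeries ℕ A) :=
  {f | ∃ a ∈ I, f = MvPowerSeries.C (σ := ℕ) (R := A) a}

/-- The set of variables with index in `[lo, hi)`. -/
def varsIn (A : Type*) [CommRing A] (lo hi : ℕ) : Set (MvPowerSeries ℕ A) :=
  {f | ∃ j : ℕ, lo ≤ j ∧ j < hi ∧ f = MvPowerSeries.X j}

/-- The set of products of two variables with indices in `[lo, hi)`. -/
def varsPairsIn (A : Type*) [CommRing A] (lo hi : ℕ) : Set (MvPowerSeries ℕ A) :=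
  {f | ∃ j k : ℕ, lo ≤ j ∧ j < hi ∧ lo ≤ k ∧ k < hi ∧
    f = MvPowerSeries.X j * MvPowerSeries.X k}

/- Convention for a henselian system over `(ξ,ρ)` with unknowns `(η,λ)`:
within `A_{m+M,n+N} = A_{m+M+n+N}`, the variable `ξ_{i+1}` has index `i` (`i < m`),
`η_{i+1}` has index `m+i` (`i < M`), `ρ_{j+1}` has index `m+M+j` (`j < n`), and
`λ_{j+1}` has index `m+M+n+j` (`j < N`). -/

/-- A henselian system `Σ` for the unknowns `(η,λ)` over `(ξ,ρ)`:
`η_i = b_{0,i}(ξ,ρ) + b_{1,i}(ξ,ρ,η,λ)` and `λ_j = c_{0,j}(ξ,ρ) + c_{1,j}(ξ,ρ,η,λ)` where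
`b_{0,i} ∈ A[ξ,ρ]`, `b_{1,i} ∈ (I,ρ,λ)A_{m+M,n+N}`, `c_{0,j} ∈ (ρ)A[ξ,ρ]` and
`c_{1,j} ∈ (I,ρ,λ²)A_{m+M,n+N}`. -/
structure HenselSys {A : Type u} [CommRing A] {I : Ideal A} (𝒜 : SCFamily A I)
    (m n M N : ℕ) where
  b0 : Fin M → MvPolynomial ℕ A
  b1 : Fin M → MvPowerSeries ℕ A
  c0 : Fin N → MvPolynomial ℕ A
  c1 : Fin N → MvPowerSeries ℕ A
  b0_vars : ∀ i, ∀ v ∈ (b0 i).vars, v < m ∨ (m + M ≤ v ∧ v < m + M + n)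
  c0_div : ∀ j, ∃ q : Fin n → MvPolynomial ℕ A,
    (∀ k, ∀ v ∈ (q k).vars, v < m ∨ (m + M ≤ v ∧ v < m + M + n)) ∧
    c0 j = ∑ k : Fin n, MvPolynomial.X (m + M + (k : ℕ)) * q k
  b1_mem : ∀ i, memSpan (𝒜.Am (m + M + n + N) : Set (MvPowerSeries ℕ A))
    (constsOf I ∪ varsIn A (m + M) (m + M + n + N)) (b1 i)
  c1_mem : ∀ j, memSpan (𝒜.Am (m + M + n + N) : Set (MvPowerSeries ℕ A))
    (constsOf I ∪ varsIn A (m + M) (m + M + n) ∪ varsPairsIn A (m + M + n) (m + M + n + N))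
    (c1 j)

/-- The `M + N` generators of the ideal `I_Σ` of a henselian system. -/
def HenselSys.gens {A : Type u} [CommRing A] {I : Ideal A} {𝒜 : SCFamily A I}
    {m n M N : ℕ} (S : HenselSys 𝒜 m n M N) : Fin M ⊕ Fin N → MvPowerSeries ℕ A :=
  Sum.elim
    (fun i => MvPowerSeries.X (m + (i : ℕ)) - (↑(S.b0 i) : MvPowerSeries ℕ A) - S.b1 i)
    (fun j => MvPowerSeries.X (m + M + n + (j : ℕ)) - (↑(S.c0 j) : MvPowerSeries ℕ A) - S.c1 j)

/-- `Σ` is a polynomial henselian system: all generators of `I_Σ` are polynomials. -/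
def HenselSys.IsPolynomial {A : Type u} [CommRing A] {I : Ideal A} {𝒜 : SCFamily A I}
    {m n M N : ℕ} (S : HenselSys 𝒜 m n M N) : Prop :=
  (∀ i, ∃ p : MvPolynomial ℕ A, S.b1 i = ↑p) ∧ (∀ j, ∃ p : MvPolynomial ℕ A, S.c1 j = ↑p)

/-- The total degree of the exponent `d` in the variables of index `≥ t`. -/
def rhoDeg (t : ℕ) (d : ℕ →₀ ℕ) : ℕ := ∑ i ∈ d.support, if t ≤ i then d i else 0

/-- Truncation of `f` keeping the monomials of degree `< k` in the variables of index `≥ t`. -/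
def rhoTrunc (t k : ℕ) (f : MvPowerSeries ℕ A) : MvPowerSeries ℕ A :=
  fun d => if rhoDeg t d < k then MvPowerSeries.coeff (R := A) d f else 0

/-- `h ∈ A_m[[ρ]]`: `h` only involves the variables `ξ` (indices `< m`) and `ρ`
(indices in `[m+M, m+M+n)`), and all its coefficients, as a series in `ρ` (and the remaining
variables), lie in `A_m`. -/
def MemAmRho {A : Type u} [CommRing A] {I : Ideal A} (𝒜 : SCFamily A I)
    (m M n : ℕ) (h : MvPowerSeries ℕ A) : Prop :=
  (∀ d : ℕ →₀ ℕ, (∃ i ∈ d.support, ¬ (i < m ∨ (m + M ≤ i ∧ i < m + M + n))) →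
    MvPowerSeries.coeff (R := A) d h = 0) ∧
  ∀ μ : ℕ →₀ ℕ, sliceA m μ h ∈ 𝒜.Am m

/-- The index (in `A_{m+M+n+N}`) of the unknown `η_i` resp. `λ_j`. -/
def etaLamIdx (m n M N : ℕ) : Fin M ⊕ Fin N → ℕ :=
  Sum.elim (fun i => m + (i : ℕ)) (fun j => m + M + n + (j : ℕ))

/-- The generating set used at step `k`: the series `η_s − p_{k,s}` (where `p_k` is the tuple
of `ρ`-degree `< k` truncations of `h`) together with the monomials of degree `k` in `ρ`
(generating the `k`-th power of the ideal `(ρ_1,…,ρ_n)`). -/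
def stepGens {A : Type u} [CommRing A] (m n M N : ℕ)
    (h : Fin M ⊕ Fin N → MvPowerSeries ℕ A) (k : ℕ) : Set (MvPowerSeries ℕ A) :=
  (Set.range fun s : Fin M ⊕ Fin N =>
    MvPowerSeries.X (etaLamIdx m n M N s) - rhoTrunc m k (h s)) ∪
  {f | ∃ μ : ℕ →₀ ℕ, (∀ i ∈ μ.support, m + M ≤ i ∧ i < m + M + n) ∧
    (∑ i ∈ μ.support, μ i) = k ∧ f = MvPowerSeries.monomial (R := A) μ 1}

/-- `h` is a power series solution of the henselian system `S`. -/
def IsSolution {A : Type u} [CommRing A] {I : Ideal A} {𝒜 : SCFamily A I}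
    {m n M N : ℕ} (S : HenselSys 𝒜 m n M N)
    (h : Fin M ⊕ Fin N → MvPowerSeries ℕ A) : Prop :=
  (∀ s, MemAmRho 𝒜 m M n (h s)) ∧
  ∀ k : ℕ, 1 ≤ k → ∀ s, memSpan (𝒜.Am (m + M + n + N) : Set (MvPowerSeries ℕ A))
    (stepGens m n M N h k) (S.gens s)

/-- `r` is the composition `g(ξ,ρ,h(ξ,ρ))` of `g` with the solution `h` of the system `S`. -/
def IsComp {A : Type u} [CommRing A] {I : Ideal A} {𝒜 : SCFamily A I}
    {m n M N : ℕ} (S : HenselSys 𝒜 m n M N)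
    (h : Fin M ⊕ Fin N → MvPowerSeries ℕ A) (g r : MvPowerSeries ℕ A) : Prop :=
  MemAmRho 𝒜 m M n r ∧
  ∀ k : ℕ, 1 ≤ k → memSpan (𝒜.Am (m + M + n + N) : Set (MvPowerSeries ℕ A))
    (stepGens m n M N h k) (g - rhoTrunc m k r)

/-- Reindexing a one-kind power series in the variables `ξ` (indices `< m`) and `ρ`
(indices in `[m+gap, ∞)`) as a two-kinds power series, `ξ_i ↦ inl i`, `ρ_j ↦ inr j`. -/
def toSep {A : Type*} [CommRing A] (m gap : ℕ) (f : MvPowerSeries ℕ A) :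
    MvPowerSeries (ℕ ⊕ ℕ) A :=
  fun e => if (∀ i : ℕ, m ≤ i → e (Sum.inl i) = 0)
    then MvPowerSeries.coeff (R := A)
      (Finsupp.mapDomain (Sum.elim id (fun j => m + gap + j)) e) f
    else 0

/-- The ring `A^H_{m,n} ⊆ A[[ξ,ρ]]` of all compositions `g(ξ,ρ,h_Σ(ξ,ρ))` where `Σ` is a
henselian system for `(η,λ)` over `(ξ,ρ)`, `h_Σ` its power series solution, and
`g ∈ A_{m+M,n+N}`. -/
def AH {A : Type u} [CommRing A] {I : Ideal A} (𝒜 : SCFamily A I) (m n : ℕ) :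
    Set (MvPowerSeries (ℕ ⊕ ℕ) A) :=
  {F | ∃ (M N : ℕ) (S : HenselSys 𝒜 m n M N) (h : Fin M ⊕ Fin N → MvPowerSeries ℕ A)
    (g r : MvPowerSeries ℕ A), IsSolution S h ∧ g ∈ 𝒜.Am (m + M + n + N) ∧
    IsComp S h g r ∧ F = toSep m M r}

/-- As `AH`, but using only polynomial henselian systems. -/
def AHpoly {A : Type u} [CommRing A] {I : Ideal A} (𝒜 : SCFamily A I) (m n : ℕ) :
    Set (MvPowerSeries (ℕ ⊕ ℕ) A) :=
  {F | ∃ (M N : ℕ) (S : HenselSys 𝒜 m n M N) (h : Fin M ⊕ Fin N → MvPowerSeries ℕ A)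
    (g r : MvPowerSeries ℕ A), S.IsPolynomial ∧ IsSolution S h ∧ g ∈ 𝒜.Am (m + M + n + N) ∧
    IsComp S h g r ∧ F = toSep m M r}

/-- `f` involves only the `ξ`-variables of index `< k`. -/
def OnlyXiBelow {A : Type*} [CommRing A] (k : ℕ) (f : MvPowerSeries (ℕ ⊕ ℕ) A) : Prop :=
  ∀ d : (ℕ ⊕ ℕ) →₀ ℕ, (∃ v ∈ d.support, ¬ ∃ i : ℕ, i < k ∧ v = Sum.inl i) →
    MvPowerSeries.coeff (R := A) d f = 0

/-- Separated regularity in `ξ_m` of degree `d` for `f ∈ A[[ξ,ρ]]` : `f` is congruent to a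
monic polynomial in `ξ_m` of degree `d`, modulo the ideal `J + (ρ)A[[ξ,ρ]]` where `J` is the
ideal of series all of whose coefficients lie in `I`. -/
def RegXiH {A : Type*} [CommRing A] (I : Ideal A) (m d : ℕ)
    (f : MvPowerSeries (ℕ ⊕ ℕ) A) : Prop :=
  ∃ c : Fin d → MvPowerSeries (ℕ ⊕ ℕ) A, (∀ i, OnlyXiBelow (m - 1) (c i)) ∧
    ∀ e : (ℕ ⊕ ℕ) →₀ ℕ, (∀ j : ℕ, e (Sum.inr j) = 0) →
      MvPowerSeries.coeff (R := A) e
        (f - ((MvPowerSeries.X (Sum.inl (m - 1))) ^ d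
          + ∑ i : Fin d, c i * (MvPowerSeries.X (Sum.inl (m - 1))) ^ (i : ℕ))) ∈ I

/-- Separated regularity in `ρ_n` of degree `d` for `f ∈ A[[ξ,ρ]]` : `f ≡ ρ_n^d` modulo the
ideal `J + (ρ_1,…,ρ_{n-1},ρ_n^{d+1})A[[ξ,ρ]]`. -/
def RegRhoH {A : Type*} [CommRing A] (I : Ideal A) (n d : ℕ)
    (f : MvPowerSeries (ℕ ⊕ ℕ) A) : Prop :=
  ∀ e : (ℕ ⊕ ℕ) →₀ ℕ, (∀ j : ℕ, j ≠ n - 1 → e (Sum.inr j) = 0) →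
    e (Sum.inr (n - 1)) ≤ d →
    MvPowerSeries.coeff (R := A) e (f - (MvPowerSeries.X (Sum.inr (n - 1))) ^ d) ∈ I


/-- `varOK m n v` says that the two-kinds variable `v` is one of `ξ_1,…,ξ_m,ρ_1,…,ρ_n`. -/
def varOK (m n : ℕ) : ℕ ⊕ ℕ → Prop := Sum.elim (· < m) (· < n)

/-- The action of a permutation of the variables on a separated power series. -/
def permute2 {A : Type*} [CommRing A] (e : Equiv.Perm (ℕ ⊕ ℕ))
    (f : MvPowerSeries (ℕ ⊕ ℕ) A) : MvPowerSeries (ℕ ⊕ ℕ) A :=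
  fun d => MvPowerSeries.coeff (R := A) (Finsupp.equivMapDomain e d) f

/-- Coefficientwise reduction modulo the ideal `I`, two-kinds version. -/
def red2 {A : Type*} [CommRing A] (I : Ideal A) :
    MvPowerSeries (ℕ ⊕ ℕ) A → MvPowerSeries (ℕ ⊕ ℕ) (A ⧸ I) :=
  MvPowerSeries.map (σ := ℕ ⊕ ℕ) (Ideal.Quotient.mk I)

/-- The coefficient series `f̄_{μν}` of `(ξ'')^μ(ρ'')^ν` when `f` is written as a series in the
variables `ξ_i (i > m), ρ_j (j > n)` with coefficients series in `ξ_1,…,ξ_m,ρ_1,…,ρ_n`. -/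
def slice2 {A : Type*} [CommRing A] (m n : ℕ) (μ : (ℕ ⊕ ℕ) →₀ ℕ)
    (f : MvPowerSeries (ℕ ⊕ ℕ) A) : MvPowerSeries (ℕ ⊕ ℕ) A :=
  fun d => if (∀ v ∈ d.support, varOK m n v) then MvPowerSeries.coeff (R := A) (d + μ) f else 0

/-- The coefficient (a series in `ξ` only) of `ρ^μ` in `f`, viewing `f ∈ R[[ξ]][[ρ]]`. -/
def sliceRho {R : Type*} [CommRing R] (μ : ℕ →₀ ℕ) (f : MvPowerSeries (ℕ ⊕ ℕ) R) :
    MvPowerSeries (ℕ ⊕ ℕ) R :=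
  fun d => if (∀ j : ℕ, d (Sum.inr j) = 0)
    then MvPowerSeries.coeff (R := R) (d + μ.mapDomain Sum.inr) f else 0

/-- `f` is (equal to) a polynomial in the `ξ`-variables only. -/
def IsPolyXi {R : Type*} [CommRing R] (f : MvPowerSeries (ℕ ⊕ ℕ) R) : Prop :=
  ∃ p : MvPolynomial (ℕ ⊕ ℕ) R, (∀ v ∈ p.vars, ∃ i : ℕ, v = Sum.inl i) ∧ f = ↑p

/-- The set of constant two-kinds power series with constant in `I`. -/
def constsOf2 {A : Type*} [CommRing A] (I : Ideal A) : Set (MvPowerSeries (ℕ ⊕ ℕ) A) :=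
  {f | ∃ a ∈ I, f = MvPowerSeries.C (σ := ℕ ⊕ ℕ) (R := A) a}

/-- The set of `ξ`-variables `ξ_1,…,ξ_m`. -/
def xiVarsBelow (A : Type*) [CommRing A] (m : ℕ) : Set (MvPowerSeries (ℕ ⊕ ℕ) A) :=
  {f | ∃ i : ℕ, i < m ∧ f = MvPowerSeries.X (Sum.inl i)}

/-- The set of `ρ`-variables `ρ_1,…,ρ_n`. -/
def rhoVarsBelow (A : Type*) [CommRing A] (n : ℕ) : Set (MvPowerSeries (ℕ ⊕ ℕ) A) :=
  {f | ∃ j : ℕ, j < n ∧ f = MvPowerSeries.X (Sum.inr j)}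

/-- The formal partial derivative `∂f/∂ξ_{i+1}` of a power series. -/
def pder {A : Type*} [CommRing A] (i : ℕ) (f : MvPowerSeries ℕ A) : MvPowerSeries ℕ A :=
  fun d => ((d i + 1 : ℕ) : A) * MvPowerSeries.coeff (R := A) (d + Finsupp.single i 1) f

/-- Assembling a point of `(K°)^m × (K°)^M × (K°)^n × (K°)^N` into a point of
`(K°)^{m+M+n+N}`, following the index conventions of a henselian system. -/
def assemble {α : Type*} (m M n N : ℕ) (x : Fin m → α) (y : Fin M → α)
    (r : Fin n → α) (z : Fin N → α) : Fin (m + M + n + N) → α :=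
  fun i => if h1 : (i : ℕ) < m then x ⟨i, h1⟩
    else if h2 : (i : ℕ) < m + M then y ⟨(i : ℕ) - m, by omega⟩
    else if h3 : (i : ℕ) < m + M + n then r ⟨(i : ℕ) - (m + M), by omega⟩
    else z ⟨(i : ℕ) - (m + M + n), by have := i.isLt; omega⟩

/-- Goodness of a strictly convergent pre-Weierstrass system: whenever a composition
`F(ξ,ρ,h_Σ(ξ,ρ))` vanishes, `F` lies in `I_Σ · (A_{m+M,n+N})_{1+(I,ρ,λ)}`, i.e. `(1+w)·F ∈ I_Σ`
for some `w ∈ (I,ρ,λ)A_{m+M,n+N}`. -/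
def IsGood {A : Type u} [CommRing A] {I : Ideal A} (𝒜 : SCFamily A I) : Prop :=
  ∀ (m n M N : ℕ) (S : HenselSys 𝒜 m n M N) (h : Fin M ⊕ Fin N → MvPowerSeries ℕ A)
    (F : MvPowerSeries ℕ A), IsSolution S h → F ∈ 𝒜.Am (m + M + n + N) →
    IsComp S h F 0 →
    ∃ w : MvPowerSeries ℕ A,
      memSpan (𝒜.Am (m + M + n + N) : Set (MvPowerSeries ℕ A))
        (constsOf I ∪ varsIn A (m + M) (m + M + n + N)) w ∧
      memSpan (𝒜.Am (m + M + n + N) : Set (MvPowerSeries ℕ A))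
        (Set.range S.gens) ((1 + w) * F)

/-- The `I`-adic completion of `A[ξ_1,…,ξ_m]` inside `A[[ξ_1,…,ξ_m]]`: the series such that,
for every `k`, all but finitely many coefficients lie in `I^k`. -/
def AdicAm (A : Type u) [CommRing A] (I : Ideal A) (m : ℕ) : Set (MvPowerSeries ℕ A) :=
  {f | VarsBelow m f ∧ ∀ k : ℕ, 1 ≤ k →
    {d : ℕ →₀ ℕ | MvPowerSeries.coeff (R := A) d f ∉ I ^ k}.Finite}

/-- The ring `T_m(K)° = K°⟨ξ_1,…,ξ_m⟩` of strictly convergent power series over the valuation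
ring `O = K°` of `K`: power series with coefficients in `K°` tending to `0`. -/
def TateAm {K : Type u} [Field K] (v : AbsoluteValue K ℝ) (O : Subring K) (m : ℕ) :
    Set (MvPowerSeries ℕ ↥O) :=
  {f | VarsBelow m f ∧ ∀ ε : ℝ, 0 < ε →
    {d : ℕ →₀ ℕ | ε ≤ v ((MvPowerSeries.coeff (R := ↥O) d f : ↥O) : K)}.Finite}

/-- Auxiliary: evaluating `σ_m` on a constant (an element of `A_0`) gives the `σ_0` value. -/
lemma sigma_const_eval {A : Type*} [CommRing A] {I : Ideal A} (𝒜 : SCFamily A I)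
    {K : Type*} [Field K] {O : ValuationSubring K}
    (τ : AnalyticStructure I 𝒜.Am K O)
    (f : MvPowerSeries ℕ A) (h0 : f ∈ 𝒜.Am 0) :
    ∀ (m : ℕ) (hm : f ∈ 𝒜.Am m) (x : Fin m → ↥O),
      τ.σ m ⟨f, hm⟩ x = τ.σ 0 ⟨f, h0⟩ (fun i => i.elim0) := by
  intro m
  induction m with
  | zero =>
    intro hm x
    exact congrArg _ (funext fun i => i.elim0)
  | succ k ih =>
    intro hm x
    rw [τ.cond3 k f (𝒜.mono (Nat.zero_le k) h0) hm x]
    exact ih _ _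

set_option maxHeartbeats 1000000 in
/-- Auxiliary: part (1) of Statement 12, as a standalone lemma. -/
lemma sigma_zero_of_coeffs_zero {A : Type*} [CommRing A] {I : Ideal A}
    (hI : I ≠ ⊤) (𝒜 : SCPreWS A I)
    {K : Type*} [Field K] {O : ValuationSubring K}
    (τ : AnalyticStructure I 𝒜.toSCFamily.Am K O) (m : ℕ)
    (f : MvPowerSeries ℕ A) (hf : f ∈ 𝒜.Am m)
    (hcoef : ∀ (μ : ℕ →₀ ℕ) (h : MvPowerSeries.C (σ := ℕ) (R := A) (MvPowerSeries.coeff (R := A) μ f) ∈ 𝒜.Am 0),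
      τ.σ 0 ⟨MvPowerSeries.C (σ := ℕ) (R := A) (MvPowerSeries.coeff (R := A) μ f), h⟩ = 0) :
    τ.σ m ⟨f, hf⟩ = 0 := by
  have hNA : Nontrivial A := by
    rcases subsingleton_or_nontrivial A with h | h
    · exact absurd (Subsingleton.elim I ⊤) hI
    · exact h
  have hCmem : ∀ (k : ℕ) (a : A), MvPowerSeries.C (σ := ℕ) (R := A) a ∈ 𝒜.Am k := fun k a => by
    rw [MvPowerSeries.c_eq_algebraMap]
    exact (𝒜.Am k).algebraMap_mem a
  obtain ⟨J, g, hg, heq⟩ := 𝒜.wnp m f hf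
  set J' : Finset (ℕ →₀ ℕ) := J.filter (fun μ => MvPowerSeries.coeff (R := A) μ f ≠ 0)
    with hJ'def
  have hsupp : ∀ μ ∈ J', ∀ i ∈ μ.support, i < m := by
    intro μ hμ i hi
    by_contra hilt
    have := 𝒜.varsBelow m f hf μ ⟨i, hi, Nat.le_of_not_lt hilt⟩
    exact (Finset.mem_filter.mp hμ).2 this
  have hmemS : ∀ μ ∈ J',
      (MvPowerSeries.monomial (R := A) μ (1 : A)) * (1 + g μ) ∈ 𝒜.Am m := by
    intro μ hμ
    have hmon : (MvPowerSeries.monomial (R := A) μ (1 : A)) ∈ 𝒜.Am m := by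
      rw [← MvPolynomial.coe_monomial]
      apply 𝒜.poly_mem
      intro i hi
      rw [MvPolynomial.vars_monomial one_ne_zero] at hi
      exact hsupp μ hμ i hi
    exact mul_mem hmon (add_mem (one_mem _) (hg μ (Finset.mem_filter.mp hμ).1).1)
  have hterm : ∀ (μ : ℕ →₀ ℕ) (a : A),
      MvPowerSeries.C (σ := ℕ) (R := A) a * MvPowerSeries.monomial (R := A) μ (1 : A)
        = MvPowerSeries.monomial (R := A) μ a := by
    intro μ a
    rw [← MvPowerSeries.monomial_zero_eq_C_apply, MvPowerSeries.monomial_mul_monomial,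
      zero_add, mul_one]
  have hfeq : (⟨f, hf⟩ : ↥(𝒜.Am m)) =
      ∑ μ ∈ J'.attach,
        (⟨MvPowerSeries.C (σ := ℕ) (R := A) (MvPowerSeries.coeff (R := A) (↑μ) f), hCmem m _⟩ : ↥(𝒜.Am m)) *
          ⟨(MvPowerSeries.monomial (R := A) (↑μ) (1 : A)) * (1 + g ↑μ), hmemS _ μ.2⟩ := by
    apply Subtype.ext
    rw [AddSubmonoidClass.coe_finset_sum]
    simp only [MulMemClass.coe_mul]
    have hthis : ∀ μ : J',
        (MvPowerSeries.C (σ := ℕ) (R := A) (MvPowerSeries.coeff (R := A) (↑μ) f)) *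
          ((MvPowerSeries.monomial (R := A) (↑μ) (1 : A)) * (1 + g ↑μ))
        = (MvPowerSeries.monomial (R := A) (↑μ) (MvPowerSeries.coeff (R := A) (↑μ) f)) * (1 + g ↑μ) := by
      intro μ
      rw [← mul_assoc, hterm]
    calc (f : MvPowerSeries ℕ A)
        = ∑ μ ∈ J, (MvPowerSeries.monomial (R := A) μ (MvPowerSeries.coeff (R := A) μ f)) * (1 + g μ) :=
          heq
      _ = ∑ μ ∈ J', (MvPowerSeries.monomial (R := A) μ (MvPowerSeries.coeff (R := A) μ f)) * (1 + g μ) := by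
          rw [hJ'def]
          refine (Finset.sum_filter_of_ne ?_).symm
          intro μ _ hne hz
          apply hne
          rw [hz, map_zero, zero_mul]
      _ = ∑ μ ∈ J'.attach,
            (MvPowerSeries.monomial (R := A) (↑μ) (MvPowerSeries.coeff (R := A) (↑μ) f)) * (1 + g ↑μ) :=
          (Finset.sum_attach J' _).symm
      _ = _ := by
          refine Finset.sum_congr rfl fun μ _ => ?_
          rw [hthis μ]
  funext x
  set_option synthInstance.maxHeartbeats 1000000 in
  rw [hfeq, map_sum, Finset.sum_apply]
  apply Finset.sum_eq_zero
  intro μ _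
  set_option synthInstance.maxHeartbeats 1000000 in
  rw [map_mul, Pi.mul_apply]
  have h0 := sigma_const_eval 𝒜.toSCFamily τ _
    (hCmem 0 (MvPowerSeries.coeff (R := A) (↑μ) f)) m (hCmem m _) x
  rw [h0, hcoef (↑μ) (hCmem 0 _)]
  simp


end SCW

open SCW in
/-- if all the coefficients of `f ∈ A_m` are sent to `0` by `σ_0` then
`σ_m(f) = 0`; consequently `σ_m` factors through the image of `𝒮^σ`
(Lemma-Definition 3.7). -/
theorem stmt12 {A : Type u} [CommRing A] (I : Ideal A) (hI : I ≠ ⊤) (𝒜 : SCPreWS A I)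
    (K : Type u) [Field K] (O : ValuationSubring K) [HenselianLocalRing ↥O]
    (τ : AnalyticStructure I 𝒜.toSCFamily.Am K O) (m : ℕ) :
    (∀ (f : MvPowerSeries ℕ A) (hf : f ∈ 𝒜.Am m),
      (∀ (μ : ℕ →₀ ℕ) (h : MvPowerSeries.C (σ := ℕ) (R := A) (MvPowerSeries.coeff (R := A) μ f) ∈ 𝒜.Am 0),
        τ.σ 0 ⟨MvPowerSeries.C (σ := ℕ) (R := A) (MvPowerSeries.coeff (R := A) μ f), h⟩ = 0) →
      τ.σ m ⟨f, hf⟩ = 0) ∧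
    (∀ (f g : MvPowerSeries ℕ A) (hf : f ∈ 𝒜.Am m) (hg : g ∈ 𝒜.Am m),
      (∀ (μ : ℕ →₀ ℕ)
        (h1 : MvPowerSeries.C (σ := ℕ) (R := A) (MvPowerSeries.coeff (R := A) μ f) ∈ 𝒜.Am 0)
        (h2 : MvPowerSeries.C (σ := ℕ) (R := A) (MvPowerSeries.coeff (R := A) μ g) ∈ 𝒜.Am 0),
        τ.σ 0 ⟨MvPowerSeries.C (σ := ℕ) (R := A) (MvPowerSeries.coeff (R := A) μ f), h1⟩ =
        τ.σ 0 ⟨MvPowerSeries.C (σ := ℕ) (R := A) (MvPowerSeries.coeff (R := A) μ g), h2⟩) →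
      τ.σ m ⟨f, hf⟩ = τ.σ m ⟨g, hg⟩) := by
  have hCmem : ∀ (k : ℕ) (a : A), MvPowerSeries.C (σ := ℕ) (R := A) a ∈ 𝒜.Am k := fun k a => by
    rw [MvPowerSeries.c_eq_algebraMap]
    exact (𝒜.Am k).algebraMap_mem a
  refine ⟨fun f hf hc => sigma_zero_of_coeffs_zero hI 𝒜 τ m f hf hc, ?_⟩
  intro f g hf hg hfg
  have hsub : f - g ∈ 𝒜.Am m := sub_mem hf hg
  have h0 : τ.σ m ⟨f - g, hsub⟩ = 0 := by
    apply sigma_zero_of_coeffs_zero hI 𝒜 τ m _ hsub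
    intro μ h
    have hsplit : (⟨MvPowerSeries.C (σ := ℕ) (R := A) (MvPowerSeries.coeff (R := A) μ (f - g)), h⟩ : ↥(𝒜.Am 0)) =
        ⟨MvPowerSeries.C (σ := ℕ) (R := A) (MvPowerSeries.coeff (R := A) μ f), hCmem 0 _⟩ -
        ⟨MvPowerSeries.C (σ := ℕ) (R := A) (MvPowerSeries.coeff (R := A) μ g), hCmem 0 _⟩ := by
      apply Subtype.ext
      simp only [AddSubgroupClass.coe_sub]
      rw [(MvPowerSeries.coeff (R := A) μ).map_sub f g, (MvPowerSeries.C (σ := ℕ) (R := A)).map_sub]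
    rw [hsplit, RingHom.map_sub, hfg μ (hCmem 0 _) (hCmem 0 _), sub_self]
  have hsplit2 : (⟨f - g, hsub⟩ : ↥(𝒜.Am m)) = ⟨f, hf⟩ - ⟨g, hg⟩ := by
    apply Subtype.ext
    simp only [AddSubgroupClass.coe_sub]
  rw [hsplit2, RingHom.map_sub, sub_eq_zero] at h0
  exact h0
end
end

section
/- Let 𝒜 = {A_m} be a strictly convergent (A,I)-pre-Weierstrass system and let σ be an analytic 𝒜-structure on a valued field K whose valuation ring is henselian and whose valuation is nontrivial. If f = Σ_μ a_μ ξ^μ ∈ A_m satisfies σ_m(f) = 0 (the zero function on (K°)^m), then σ_0(a_μ) = 0 for every μ ∈ ℕ^m. -/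
noncomputable section
open scoped Classical
open MvPowerSeries

section Auxiliary

open SCW

/-- Uniqueness of base-`B` digit expansions. -/
lemma scw_digits (B : ℕ) (hB : 0 < B) : ∀ (m : ℕ) (a b : ℕ → ℕ),
    (∀ i, i < m → a i < B) → (∀ i, i < m → b i < B) →
    (∑ i ∈ Finset.range m, a i * B ^ i) = (∑ i ∈ Finset.range m, b i * B ^ i) →
    ∀ i, i < m → a i = b i := by
  intro m
  induction m with
  | zero => intro a b _ _ _ i hi; omega
  | succ n ih =>
    intro a b ha hb hsum i hi
    have key : ∀ c : ℕ → ℕ, (∑ i ∈ Finset.range (n + 1), c i * B ^ i)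
        = (∑ i ∈ Finset.range n, c (i + 1) * B ^ i) * B + c 0 := by
      intro c
      rw [Finset.sum_range_succ' (fun i => c i * B ^ i) n, Finset.sum_mul, pow_zero, mul_one]
      congr 1
      exact Finset.sum_congr rfl (fun j _ => by rw [pow_succ]; ring)
    rw [key a, key b] at hsum
    have h0 : a 0 = b 0 := by
      have h1 : ((∑ i ∈ Finset.range n, a (i + 1) * B ^ i) * B + a 0) % B = a 0 := by
        rw [mul_comm, Nat.mul_add_mod, Nat.mod_eq_of_lt (ha 0 (by omega))]
      have h2 : ((∑ i ∈ Finset.range n, b (i + 1) * B ^ i) * B + b 0) % B = b 0 := by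
        rw [mul_comm, Nat.mul_add_mod, Nat.mod_eq_of_lt (hb 0 (by omega))]
      rw [← h1, ← h2, hsum]
    have htail : (∑ i ∈ Finset.range n, a (i + 1) * B ^ i)
        = ∑ i ∈ Finset.range n, b (i + 1) * B ^ i := by
      apply Nat.eq_of_mul_eq_mul_right hB
      omega
    rcases Nat.eq_zero_or_pos i with h | h
    · subst h; exact h0
    · obtain ⟨j, rfl⟩ : ∃ j, i = j + 1 := ⟨i - 1, by omega⟩
      exact ih (fun i => a (i + 1)) (fun i => b (i + 1)) (fun i hi => ha _ (by omega))
        (fun i hi => hb _ (by omega)) htail j (by omega)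

/-- The key valuation-theoretic fact: if a "generalized polynomial" in powers of an element
`y ≠ 0` of the maximal ideal, with unit fudge factors, vanishes for every power exponent `t`,
then all its coefficients vanish. -/
lemma scw_key {K : Type*} [Field K] (O : ValuationSubring K) (y : ↥O) (hy0 : y ≠ 0)
    (hy1 : y ∈ IsLocalRing.maximalIdeal ↥O) {ι : Type*} (s : Finset ι)
    (c : ι → ↥O) (N : ι → ℕ) (hN : ∀ i ∈ s, ∀ j ∈ s, N i = N j → i = j)
    (W : ℕ → ι → ↥O) (hW : ∀ t : ℕ, ∀ i ∈ s, IsUnit (W t i))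
    (hsum : ∀ t : ℕ, ∑ i ∈ s, c i * y ^ (t * N i) * W t i = 0) :
    ∀ i ∈ s, c i = 0 := by
  classical
  by_contra hcon
  push_neg at hcon
  obtain ⟨i₀, hi₀s, hi₀⟩ := hcon
  have hγ0 : O.valuation (y : K) ≠ 0 := by
    rw [Ne, Valuation.zero_iff, ZeroMemClass.coe_eq_zero]; exact hy0
  have hγpos : (0 : O.ValueGroup) < O.valuation (y : K) := zero_lt_iff.mpr hγ0
  have hγ1 : O.valuation (y : K) < 1 := (O.valuation_lt_one_iff y).1 hy1
  -- valuations of units are `1`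
  have hWv : ∀ (t : ℕ) (i : ι), i ∈ s → O.valuation ((W t i : ↥O) : K) = 1 := by
    intro t i hi
    obtain ⟨u, hu⟩ := hW t i hi
    have hinv : (W t i) * ↑(u⁻¹) = 1 := by rw [← hu]; exact u.mul_inv
    have hmul : ((W t i : ↥O) : K) * (((u⁻¹ : (↥O)ˣ) : ↥O) : K) = 1 := by
      exact_mod_cast congrArg (fun z : ↥O => (z : K)) hinv
    have h1 : O.valuation ((W t i : ↥O) : K) * O.valuation (((u⁻¹ : (↥O)ˣ) : ↥O) : K) = 1 := by
      rw [← O.valuation.map_mul, hmul, O.valuation.map_one]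
    have ha : O.valuation ((W t i : ↥O) : K) ≤ 1 := O.valuation_le_one _
    have hb : O.valuation (((u⁻¹ : (↥O)ˣ) : ↥O) : K) ≤ 1 := O.valuation_le_one _
    have hble : (1 : O.ValueGroup) ≤ O.valuation (((u⁻¹ : (↥O)ˣ) : ↥O) : K) := by
      calc (1 : O.ValueGroup) = _ := h1.symm
        _ ≤ 1 * O.valuation (((u⁻¹ : (↥O)ˣ) : ↥O) : K) := mul_le_mul_left ha _
        _ = _ := one_mul _
    have hb1 : O.valuation (((u⁻¹ : (↥O)ˣ) : ↥O) : K) = 1 := le_antisymm hb hble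
    rw [hb1, mul_one] at h1; exact h1
  set s' := s.filter (fun i => c i ≠ 0) with hs'
  have hs'ne : s'.Nonempty := ⟨i₀, Finset.mem_filter.mpr ⟨hi₀s, hi₀⟩⟩
  -- the set of "bad" exponents is finite
  have hpair : ∀ i ∈ s', ∀ j ∈ s',
      ({t : ℕ | i ≠ j ∧ O.valuation ((c i : ↥O) : K) * O.valuation (y : K) ^ (t * N i)
        = O.valuation ((c j : ↥O) : K) * O.valuation (y : K) ^ (t * N j)}).Subsingleton := by
    intro i hi j hj t ht t' ht'
    obtain ⟨hij, he⟩ := ht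
    obtain ⟨-, he'⟩ := ht'
    have hci : O.valuation ((c i : ↥O) : K) ≠ 0 := by
      rw [Ne, Valuation.zero_iff, ZeroMemClass.coe_eq_zero]
      exact (Finset.mem_filter.mp hi).2
    have hcj : O.valuation ((c j : ↥O) : K) ≠ 0 := by
      rw [Ne, Valuation.zero_iff, ZeroMemClass.coe_eq_zero]
      exact (Finset.mem_filter.mp hj).2
    have hexp : O.valuation (y : K) ^ (t * N i + t' * N j)
        = O.valuation (y : K) ^ (t * N j + t' * N i) := by
      apply mul_left_cancel₀ (mul_ne_zero hci hcj)
      calc O.valuation ((c i : ↥O) : K) * O.valuation ((c j : ↥O) : K)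
            * O.valuation (y : K) ^ (t * N i + t' * N j)
          = (O.valuation ((c i : ↥O) : K) * O.valuation (y : K) ^ (t * N i))
            * (O.valuation ((c j : ↥O) : K) * O.valuation (y : K) ^ (t' * N j)) := by
            rw [pow_add, mul_mul_mul_comm]
        _ = (O.valuation ((c j : ↥O) : K) * O.valuation (y : K) ^ (t * N j))
            * (O.valuation ((c i : ↥O) : K) * O.valuation (y : K) ^ (t' * N i)) := by
            rw [he, ← he']
        _ = O.valuation ((c i : ↥O) : K) * O.valuation ((c j : ↥O) : K)
            * O.valuation (y : K) ^ (t * N j + t' * N i) := by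
            rw [pow_add, mul_mul_mul_comm, mul_comm (O.valuation ((c j : ↥O) : K))]
    have hexpnat : t * N i + t' * N j = t * N j + t' * N i :=
      pow_right_injective₀ hγpos (ne_of_lt hγ1) hexp
    have hNij : N i ≠ N j := fun h =>
      hij (hN i (Finset.mem_filter.mp hi).1 j (Finset.mem_filter.mp hj).1 h)
    have h2 : (t : ℤ) * N i + (t' : ℤ) * N j = (t : ℤ) * N j + (t' : ℤ) * N i := by
      exact_mod_cast hexpnat
    have h3 : ((t : ℤ) - t') * ((N i : ℤ) - N j) = 0 := by linear_combination h2
    rcases mul_eq_zero.mp h3 with h4 | h4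
    · have : (t : ℤ) = t' := by linarith
      exact_mod_cast this
    · exfalso
      apply hNij
      have : (N i : ℤ) = N j := by linarith
      exact_mod_cast this
  have hbadfin : ({t : ℕ | ∃ i ∈ s', ∃ j ∈ s', i ≠ j ∧
      O.valuation ((c i : ↥O) : K) * O.valuation (y : K) ^ (t * N i)
        = O.valuation ((c j : ↥O) : K) * O.valuation (y : K) ^ (t * N j)}).Finite := by
    apply Set.Finite.subset (Set.Finite.biUnion (s'.finite_toSet) (fun i hi =>
      Set.Finite.biUnion (s'.finite_toSet) (fun j hj =>
        (hpair i hi j hj).finite)))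
    intro t ht
    obtain ⟨i, hi, j, hj, hij, he⟩ := ht
    exact Set.mem_biUnion hi (Set.mem_biUnion hj ⟨hij, he⟩)
  obtain ⟨t, ht⟩ := (hbadfin.infinite_compl).nonempty
  have htgood : ∀ i ∈ s', ∀ j ∈ s', i ≠ j →
      O.valuation ((c i : ↥O) : K) * O.valuation (y : K) ^ (t * N i)
        ≠ O.valuation ((c j : ↥O) : K) * O.valuation (y : K) ^ (t * N j) := by
    intro i hi j hj hij he
    exact ht ⟨i, hi, j, hj, hij, he⟩
  -- pick a maximal term
  obtain ⟨j, hjs', hjmax⟩ := Finset.exists_max_image s'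
    (fun i => O.valuation ((c i : ↥O) : K) * O.valuation (y : K) ^ (t * N i)) hs'ne
  -- the sum, in `K`
  have hK : ∑ i ∈ s, (((c i : ↥O) : K) * ((y : ↥O) : K) ^ (t * N i) * ((W t i : ↥O) : K)) = 0 := by
    have h := congrArg (O.subtype) (hsum t)
    rw [map_sum] at h
    simpa using h
  have hK' : ∑ i ∈ s', (((c i : ↥O) : K) * ((y : ↥O) : K) ^ (t * N i) * ((W t i : ↥O) : K)) = 0 := by
    rw [Finset.sum_subset (Finset.filter_subset _ _) (fun i hi hni => ?_), hK]
    have hc0 : c i = 0 := by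
      by_contra hc
      exact hni (Finset.mem_filter.mpr ⟨hi, hc⟩)
    rw [hc0]
    push_cast
    rw [zero_mul, zero_mul]
  have hterm : ∀ i ∈ s,
      O.valuation (((c i : ↥O) : K) * ((y : ↥O) : K) ^ (t * N i) * ((W t i : ↥O) : K))
        = O.valuation ((c i : ↥O) : K) * O.valuation (y : K) ^ (t * N i) := by
    intro i hi
    rw [O.valuation.map_mul, O.valuation.map_mul, O.valuation.map_pow, hWv t i hi, mul_one]
  have hcj0 : O.valuation ((c j : ↥O) : K) ≠ 0 := by
    rw [Ne, Valuation.zero_iff, ZeroMemClass.coe_eq_zero]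
    exact (Finset.mem_filter.mp hjs').2
  have hj0 : O.valuation (((c j : ↥O) : K) * ((y : ↥O) : K) ^ (t * N j) * ((W t j : ↥O) : K)) ≠ 0 := by
    rw [hterm j (Finset.mem_filter.mp hjs').1]
    exact mul_ne_zero hcj0 (pow_ne_zero _ hγ0)
  have hlt : ∀ i ∈ s' \ {j},
      O.valuation (((c i : ↥O) : K) * ((y : ↥O) : K) ^ (t * N i) * ((W t i : ↥O) : K))
        < O.valuation (((c j : ↥O) : K) * ((y : ↥O) : K) ^ (t * N j) * ((W t j : ↥O) : K)) := by
    intro i hi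
    obtain ⟨his', hineq⟩ := Finset.mem_sdiff.mp hi
    have hij : i ≠ j := by simpa using hineq
    rw [hterm i (Finset.mem_filter.mp his').1, hterm j (Finset.mem_filter.mp hjs').1]
    exact lt_of_le_of_ne (hjmax i his') (htgood i his' j hjs' hij)
  have hfinal := Valuation.map_sum_eq_of_lt O.valuation hjs' hlt
  rw [hK', O.valuation.map_zero] at hfinal
  exact hj0 hfinal.symm

universe u' v'

section AnalyticAux

variable {A : Type u'} [CommRing A] {I : Ideal A}
  {Am : ℕ → Subalgebra A (MvPowerSeries ℕ A)}
  {K : Type v'} [Field K] {O : ValuationSubring K}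

lemma scw_C_mem (Am : ℕ → Subalgebra A (MvPowerSeries ℕ A)) (a : A) (k : ℕ) :
    MvPowerSeries.C (σ := ℕ) (R := A) a ∈ Am k := by
  have h : MvPowerSeries.C (σ := ℕ) (R := A) a = algebraMap A (MvPowerSeries ℕ A) a := by
    rw [MvPowerSeries.c_eq_algebraMap]
  rw [h]
  exact (Am k).algebraMap_mem a

lemma scw_constEval (τ : AnalyticStructure I Am K O) :
    ∀ (k : ℕ) (x : Fin k → ↥O) (a : A) (h : MvPowerSeries.C (σ := ℕ) (R := A) a ∈ Am k),
      τ.σ k ⟨MvPowerSeries.C (σ := ℕ) (R := A) a, h⟩ x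
        = τ.σ 0 ⟨MvPowerSeries.C (σ := ℕ) (R := A) a, scw_C_mem Am a 0⟩ (fun i => i.elim0) := by
  intro k
  induction k with
  | zero =>
    intro x a h
    exact congrArg _ (Subsingleton.elim _ _)
  | succ n ih =>
    intro x a h
    rw [τ.cond3 n _ (scw_C_mem Am a n) h x]
    exact ih _ a _

/-- The homomorphism `σ₀ ∘ C : A →+* O`. -/
def scwPhi (τ : AnalyticStructure I Am K O) : A →+* ↥O :=
  (Pi.evalRingHom (fun _ : Fin 0 → ↥O => ↥O) (fun i => i.elim0)).comp
    ((τ.σ 0).comp (algebraMap A ↥(Am 0)))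

lemma scwPhi_eq (τ : AnalyticStructure I Am K O) (a : A)
    (h : MvPowerSeries.C (σ := ℕ) (R := A) a ∈ Am 0) (x : Fin 0 → ↥O) :
    τ.σ 0 ⟨MvPowerSeries.C (σ := ℕ) (R := A) a, h⟩ x = scwPhi τ a := by
  have h1 : (⟨MvPowerSeries.C (σ := ℕ) (R := A) a, h⟩ : ↥(Am 0)) = algebraMap A ↥(Am 0) a := by
    apply Subtype.ext
    show MvPowerSeries.C (σ := ℕ) (R := A) a = ↑((algebraMap A ↥(Am 0)) a)
    rw [MvPowerSeries.c_eq_algebraMap]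
    rfl
  rw [h1]
  exact congrArg _ (Subsingleton.elim _ _)

lemma scw_monoEval (τ : AnalyticStructure I Am K O) (m' : ℕ)
    (hX : ∀ i : ℕ, i < m' → (MvPowerSeries.X i : MvPowerSeries ℕ A) ∈ Am m')
    (hM : ∀ (μ : ℕ →₀ ℕ) (a : A), (∀ i ∈ μ.support, i < m') →
      MvPowerSeries.monomial (R := A) μ a ∈ Am m') :
    ∀ (μ : ℕ →₀ ℕ), (∀ i ∈ μ.support, i < m') → ∀ (a : A)
      (hmem : MvPowerSeries.monomial (R := A) μ a ∈ Am m') (x : Fin m' → ↥O),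
      τ.σ m' ⟨MvPowerSeries.monomial (R := A) μ a, hmem⟩ x
        = scwPhi τ a * ∏ i ∈ μ.support, (if h : i < m' then x ⟨i, h⟩ else 0) ^ μ i := by
  intro μ
  induction μ using Finsupp.induction with
  | zero =>
    intro _ a hmem x
    have h1 : (⟨MvPowerSeries.monomial (R := A) (0 : ℕ →₀ ℕ) a, hmem⟩ : ↥(Am m'))
        = (⟨MvPowerSeries.C (σ := ℕ) (R := A) a, scw_C_mem Am a m'⟩ : ↥(Am m')) :=
      Subtype.ext (MvPowerSeries.monomial_zero_eq_C_apply a)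
    rw [h1, scw_constEval τ m' x a, scwPhi_eq τ a (scw_C_mem Am a 0)]
    simp
  | single_add i b ν hi hb ih =>
    intro hsupp a hmem x
    have hsuppeq : (Finsupp.single i b + ν).support = insert i ν.support := by
      rw [Finsupp.support_add_eq, Finsupp.support_single_ne_zero i hb]
      · rw [Finset.insert_eq]
      · rw [Finsupp.support_single_ne_zero i hb]
        exact Finset.disjoint_singleton_left.mpr hi
    have him' : i < m' := hsupp i (by rw [hsuppeq]; exact Finset.mem_insert_self _ _)
    have hν : ∀ j ∈ ν.support, j < m' := fun j hj =>
      hsupp j (by rw [hsuppeq]; exact Finset.mem_insert_of_mem hj)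
    have hdecomp : MvPowerSeries.monomial (R := A) (Finsupp.single i b + ν) a
        = (MvPowerSeries.X i : MvPowerSeries ℕ A) ^ b * MvPowerSeries.monomial (R := A) ν a := by
      rw [MvPowerSeries.X_pow_eq, MvPowerSeries.monomial_mul_monomial, one_mul]
    have hνmem : MvPowerSeries.monomial (R := A) ν a ∈ Am m' := hM ν a hν
    have hsub : (⟨MvPowerSeries.monomial (R := A) (Finsupp.single i b + ν) a, hmem⟩ : ↥(Am m'))
        = (⟨MvPowerSeries.X i, hX i him'⟩ : ↥(Am m')) ^ b
          * ⟨MvPowerSeries.monomial (R := A) ν a, hνmem⟩ := by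
      apply Subtype.ext
      rw [MulMemClass.coe_mul, SubmonoidClass.coe_pow]
      exact hdecomp
    rw [hsub, map_mul, map_pow, Pi.mul_apply, Pi.pow_apply,
      τ.cond2 m' i him' (hX i him') x, ih hν a hνmem x]
    rw [hsuppeq, Finset.prod_insert hi]
    have hval_i : (Finsupp.single i b + ν) i = b := by
      rw [Finsupp.add_apply, Finsupp.single_eq_same, Finsupp.notMem_support_iff.mp hi, add_zero]
    have hprodcongr : (∏ j ∈ ν.support,
          (if h : j < m' then x ⟨j, h⟩ else 0) ^ ((Finsupp.single i b + ν) j))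
        = ∏ j ∈ ν.support, (if h : j < m' then x ⟨j, h⟩ else 0) ^ ν j := by
      apply Finset.prod_congr rfl
      intro j hj
      have hij : i ≠ j := by rintro rfl; exact hi hj
      rw [Finsupp.add_apply, Finsupp.single_eq_of_ne hij.symm, zero_add]
    rw [hval_i, hprodcongr, dif_pos him']
    ring

end AnalyticAux

end Auxiliary


open SCW in
/-- over a henselian field with nontrivial valuation, `σ_m(f) = 0` implies
that all the coefficients of `f` are sent to `0` by `σ_0` (Remark 3.8 a)). -/
theorem stmt13 {A : Type u} [CommRing A] (I : Ideal A) (hI : I ≠ ⊤) (𝒜 : SCPreWS A I)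
    (K : Type u) [Field K] (O : ValuationSubring K) [HenselianLocalRing ↥O]
    (hnontriv : ∃ y : ↥O, y ≠ 0 ∧ y ∈ IsLocalRing.maximalIdeal ↥O)
    (τ : AnalyticStructure I 𝒜.toSCFamily.Am K O) (m : ℕ)
    (f : MvPowerSeries ℕ A) (hf : f ∈ 𝒜.Am m) (hσ : τ.σ m ⟨f, hf⟩ = 0) :
    ∀ (μ : ℕ →₀ ℕ) (h : MvPowerSeries.C (σ := ℕ) (R := A) (MvPowerSeries.coeff (R := A) μ f) ∈ 𝒜.Am 0),
      τ.σ 0 ⟨MvPowerSeries.C (σ := ℕ) (R := A) (MvPowerSeries.coeff (R := A) μ f), h⟩ = 0 := by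
  classical
  obtain ⟨y, hy0, hy1⟩ := hnontriv
  set m' := m + 1 with hm'def
  have hf' : f ∈ 𝒜.Am m' := 𝒜.mono (Nat.le_succ m) hf
  have hσ' : ∀ x, τ.σ m' ⟨f, hf'⟩ x = 0 := by
    intro x
    rw [τ.cond3 m f hf hf' x, hσ]
    rfl
  -- generic facts about variables of monomials
  have hvars : ∀ (s : ℕ →₀ ℕ) (r : A) (j : ℕ),
      j ∈ (MvPolynomial.monomial s r).vars → j ∈ s.support := by
    intro s r j hj
    by_cases hr : r = 0
    · subst hr
      rw [map_zero, MvPolynomial.vars_0] at hj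
      exact absurd hj (Finset.notMem_empty j)
    · rwa [MvPolynomial.vars_monomial hr] at hj
  have hXmem : ∀ i : ℕ, i < m' → (MvPowerSeries.X i : MvPowerSeries ℕ A) ∈ 𝒜.Am m' := by
    intro i hi
    rw [← MvPolynomial.coe_X]
    apply 𝒜.poly_mem
    intro j hj
    have h1 : j ∈ (Finsupp.single i 1).support := hvars (Finsupp.single i 1) 1 j hj
    have h2 : j = i := by simpa using Finsupp.support_single_subset h1
    omega
  have hMmem : ∀ (μ : ℕ →₀ ℕ) (a : A), (∀ i ∈ μ.support, i < m') →
      MvPowerSeries.monomial (R := A) μ a ∈ 𝒜.Am m' := by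
    intro μ a hs
    rw [← MvPolynomial.coe_monomial]
    apply 𝒜.poly_mem
    intro j hj
    exact hs j (hvars μ a j hj)
  -- the weak Noetherian decomposition
  obtain ⟨J, g, hg, hfeq⟩ := 𝒜.wnp m' f hf'
  -- each `1 + g μ` is a unit of `A_{m'}`
  have hunit : ∀ μ ∈ J, ∃ w ∈ 𝒜.Am m', (1 + g μ) * w = 1 := by
    intro μ hμ
    obtain ⟨hgmem, hgred⟩ := hg μ hμ
    have humem : (1 : MvPowerSeries ℕ A) + g μ ∈ 𝒜.Am m' := add_mem (one_mem _) hgmem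
    have hred1 : red I ((1 : MvPowerSeries ℕ A) + g μ) = 1 := by
      simp only [SCW.red] at hgred ⊢
      rw [map_add, map_one, hgred, add_zero]
    have hreg : SCRegular I m' 0 ((1 : MvPowerSeries ℕ A) + g μ) := by
      refine ⟨fun i => i.elim0, fun i => i.elim0, ?_⟩
      rw [hred1]
      simp
    obtain ⟨⟨u, r⟩, ⟨hu1, ⟨w, hw, huw⟩, hr, heq⟩, -⟩ :=
      𝒜.wprep 0 m' (by omega) _ humem hreg
    have heq' : (1 : MvPowerSeries ℕ A) + g μ = u := by
      rw [heq]; simp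
    exact ⟨w, hw, by rw [heq']; exact huw⟩
  -- coefficients and membership of monomials
  have hcoeff0 : ∀ μ : ℕ →₀ ℕ, ¬(∀ i ∈ μ.support, i < m') → MvPowerSeries.coeff (R := A) μ f = 0 := by
    intro μ hμ
    push_neg at hμ
    obtain ⟨i, hi, hmi⟩ := hμ
    exact 𝒜.varsBelow m' f hf' μ ⟨i, hi, hmi⟩
  have hMonoMem : ∀ μ : ℕ →₀ ℕ,
      MvPowerSeries.monomial (R := A) μ (MvPowerSeries.coeff (R := A) μ f) ∈ 𝒜.Am m' := by
    intro μ
    by_cases h : ∀ i ∈ μ.support, i < m'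
    · exact hMmem μ _ h
    · rw [hcoeff0 μ h, map_zero]
      exact zero_mem _
  set U : (ℕ →₀ ℕ) → ↥(𝒜.Am m') := fun μ =>
    if h : μ ∈ J then ⟨1 + g μ, add_mem (one_mem _) (hg μ h).1⟩ else 1 with hUdef
  set Mo : (ℕ →₀ ℕ) → ↥(𝒜.Am m') := fun μ =>
    ⟨MvPowerSeries.monomial (R := A) μ (MvPowerSeries.coeff (R := A) μ f), hMonoMem μ⟩ with hModef
  have hsplit : (⟨f, hf'⟩ : ↥(𝒜.Am m')) = ∑ μ ∈ J, Mo μ * U μ := by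
    apply Subtype.ext
    have hcoe : ((∑ μ ∈ J, Mo μ * U μ : ↥(𝒜.Am m')) : MvPowerSeries ℕ A)
        = ∑ μ ∈ J, ((Mo μ : MvPowerSeries ℕ A) * (U μ : MvPowerSeries ℕ A)) := by
      rw [show ((∑ μ ∈ J, Mo μ * U μ : ↥(𝒜.Am m')) : MvPowerSeries ℕ A)
          = (𝒜.Am m').val (∑ μ ∈ J, Mo μ * U μ) from rfl, map_sum]
      exact Finset.sum_congr rfl (fun μ _ => by rw [map_mul]; rfl)
    rw [hcoe]
    show f = _
    rw [hfeq]
    apply Finset.sum_congr rfl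
    intro μ hμ
    congr 1
    show _ = ((U μ : ↥(𝒜.Am m')) : MvPowerSeries ℕ A)
    rw [hUdef]
    simp only [dif_pos hμ]
  -- the fundamental vanishing identity
  have hmain : ∀ x : Fin m' → ↥O,
      ∑ μ ∈ J, (scwPhi τ (MvPowerSeries.coeff (R := A) μ f)
        * ∏ i ∈ μ.support, (if h : i < m' then x ⟨i, h⟩ else 0) ^ μ i)
        * (τ.σ m' (U μ) x) = 0 := by
    intro x
    have h1 : τ.σ m' ⟨f, hf'⟩ x = ∑ μ ∈ J, τ.σ m' (Mo μ) x * τ.σ m' (U μ) x := by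
      set_option synthInstance.maxHeartbeats 1000000 in
      rw [hsplit, map_sum, Finset.sum_apply]
      exact Finset.sum_congr rfl (fun μ _ => by rw [map_mul, Pi.mul_apply])
    rw [hσ' x] at h1
    have h2 : ∀ μ ∈ J, τ.σ m' (Mo μ) x = scwPhi τ (MvPowerSeries.coeff (R := A) μ f)
        * ∏ i ∈ μ.support, (if h : i < m' then x ⟨i, h⟩ else 0) ^ μ i := by
      intro μ _
      by_cases h : ∀ i ∈ μ.support, i < m'
      · exact scw_monoEval τ m' hXmem hMmem μ h _ (hMonoMem μ) x
      · have h0 := hcoeff0 μ h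
        have hMo0 : Mo μ = 0 := by
          rw [hModef]
          exact Subtype.ext (by show MvPowerSeries.monomial (R := A) μ _ = 0; rw [h0, map_zero])
        rw [hMo0, map_zero, h0, map_zero, zero_mul]
        rfl
    calc ∑ μ ∈ J, (scwPhi τ (MvPowerSeries.coeff (R := A) μ f)
          * ∏ i ∈ μ.support, (if h : i < m' then x ⟨i, h⟩ else 0) ^ μ i) * (τ.σ m' (U μ) x)
        = ∑ μ ∈ J, τ.σ m' (Mo μ) x * τ.σ m' (U μ) x :=
          Finset.sum_congr rfl (fun μ hμ => by rw [h2 μ hμ])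
      _ = 0 := h1.symm
  -- the base for digit expansions
  set B : ℕ := 1 + ∑ μ ∈ J, ∑ i ∈ μ.support, μ i with hBdef
  have hBpos : 0 < B := by omega
  have hBbound : ∀ μ ∈ J, ∀ i : ℕ, μ i < B := by
    intro μ hμ i
    by_cases hi : i ∈ μ.support
    · have h1 : μ i ≤ ∑ i ∈ μ.support, μ i :=
        Finset.single_le_sum (fun _ _ => Nat.zero_le _) hi
      have h2 : (∑ i ∈ μ.support, μ i) ≤ ∑ μ ∈ J, ∑ i ∈ μ.support, μ i :=
        Finset.single_le_sum (f := fun ν : ℕ →₀ ℕ => ∑ i ∈ ν.support, ν i)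
          (fun _ _ => Nat.zero_le _) hμ
      omega
    · rw [Finsupp.notMem_support_iff.mp hi]; omega
  set Nf : (ℕ →₀ ℕ) → ℕ := fun μ => ∑ i ∈ μ.support, μ i * B ^ i with hNfdef
  set J' := J.filter (fun μ => ∀ i ∈ μ.support, i < m') with hJ'def
  have hNinj : ∀ μ ∈ J', ∀ ν ∈ J', Nf μ = Nf ν → μ = ν := by
    intro μ hμ ν hν hE
    have hμs := (Finset.mem_filter.mp hμ).2
    have hνs := (Finset.mem_filter.mp hν).2
    have hrange : ∀ ρ : ℕ →₀ ℕ, (∀ i ∈ ρ.support, i < m') →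
        Nf ρ = ∑ i ∈ Finset.range m', ρ i * B ^ i := by
      intro ρ hρ
      refine Finset.sum_subset ?_ ?_
      · intro i hi; exact Finset.mem_range.mpr (hρ i hi)
      · intro i _ hi; rw [Finsupp.notMem_support_iff.mp hi, zero_mul]
    rw [hrange μ hμs, hrange ν hνs] at hE
    have hdig := scw_digits B hBpos m' (fun i => μ i) (fun i => ν i)
      (fun i _ => hBbound μ (Finset.mem_filter.mp hμ).1 i)
      (fun i _ => hBbound ν (Finset.mem_filter.mp hν).1 i) hE
    ext i
    by_cases hi : i < m'
    · exact hdig i hi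
    · have h1 : μ i = 0 := by
        by_contra hcon
        exact hi (hμs i (Finsupp.mem_support_iff.mpr hcon))
      have h2 : ν i = 0 := by
        by_contra hcon
        exact hi (hνs i (Finsupp.mem_support_iff.mpr hcon))
      rw [h1, h2]
  -- specialization points
  set xf : ℕ → Fin m' → ↥O := fun t i => y ^ (t * B ^ (i : ℕ)) with hxfdef
  have hkeyhyp : ∀ t : ℕ, ∑ μ ∈ J', scwPhi τ (MvPowerSeries.coeff (R := A) μ f)
      * y ^ (t * Nf μ) * (τ.σ m' (U μ) (xf t)) = 0 := by
    intro t
    have h1 := hmain (xf t)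
    have h2 : ∑ μ ∈ J', (scwPhi τ (MvPowerSeries.coeff (R := A) μ f)
        * ∏ i ∈ μ.support, (if h : i < m' then xf t ⟨i, h⟩ else 0) ^ μ i)
        * (τ.σ m' (U μ) (xf t)) = 0 := by
      refine Eq.trans (Finset.sum_subset (Finset.filter_subset _ _)
        (fun μ hμ hnμ => ?_)) h1
      have h3 : ¬(∀ i ∈ μ.support, i < m') := by
        intro hcon
        exact hnμ (Finset.mem_filter.mpr ⟨hμ, hcon⟩)
      rw [hcoeff0 μ h3, map_zero, zero_mul, zero_mul]
    refine Eq.trans (Finset.sum_congr rfl fun μ hμ => ?_) h2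
    have hs := (Finset.mem_filter.mp hμ).2
    congr 2
    calc y ^ (t * Nf μ)
        = y ^ (∑ i ∈ μ.support, (t * B ^ i) * μ i) := by
          congr 1
          rw [hNfdef]
          simp only [Finset.mul_sum]
          exact Finset.sum_congr rfl (fun i _ => by ring)
      _ = ∏ i ∈ μ.support, (y ^ ((t * B ^ i) * μ i)) :=
          (Finset.prod_pow_eq_pow_sum _ _ _).symm
      _ = ∏ i ∈ μ.support, (if h : i < m' then xf t ⟨i, h⟩ else 0) ^ μ i := by
          apply Finset.prod_congr rfl
          intro i hi
          rw [dif_pos (hs i hi), hxfdef]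
          rw [← pow_mul]
  -- units
  have hunitW : ∀ (t : ℕ), ∀ μ ∈ J', IsUnit (τ.σ m' (U μ) (xf t)) := by
    intro t μ hμ
    have hμJ := (Finset.mem_filter.mp hμ).1
    obtain ⟨w, hw, hww⟩ := hunit μ hμJ
    have hU1 : U μ * ⟨w, hw⟩ = 1 := by
      apply Subtype.ext
      rw [MulMemClass.coe_mul, hUdef]
      simp only [dif_pos hμJ]
      exact hww
    have h2 : τ.σ m' (U μ) (xf t) * τ.σ m' ⟨w, hw⟩ (xf t) = 1 := by
      rw [← Pi.mul_apply, ← map_mul, hU1, map_one]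
      rfl
    exact IsUnit.of_mul_eq_one _ h2
  -- the key lemma
  have hzero' : ∀ μ ∈ J', scwPhi τ (MvPowerSeries.coeff (R := A) μ f) = 0 :=
    scw_key O y hy0 hy1 J' (fun μ => scwPhi τ (MvPowerSeries.coeff (R := A) μ f)) Nf hNinj
      (fun t μ => τ.σ m' (U μ) (xf t)) hunitW hkeyhyp
  have hzero : ∀ μ ∈ J, scwPhi τ (MvPowerSeries.coeff (R := A) μ f) = 0 := by
    intro μ hμ
    by_cases h : ∀ i ∈ μ.support, i < m'
    · exact hzero' μ (Finset.mem_filter.mpr ⟨hμ, h⟩)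
    · rw [hcoeff0 μ h, map_zero]
  -- all coefficients are killed
  have hall : ∀ ν : ℕ →₀ ℕ, scwPhi τ (MvPowerSeries.coeff (R := A) ν f) = 0 := by
    intro ν
    have h1 : MvPowerSeries.coeff (R := A) ν f = ∑ μ ∈ J, MvPowerSeries.coeff (R := A) ν
        (MvPowerSeries.monomial (R := A) μ (MvPowerSeries.coeff (R := A) μ f) * (1 + g μ)) := by
      conv_lhs => rw [hfeq]
      rw [map_sum]
    rw [h1, map_sum]
    apply Finset.sum_eq_zero
    intro μ hμ
    rw [MvPowerSeries.coeff_monomial_mul]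
    split
    · rw [map_mul, hzero μ hμ, zero_mul]
    · rw [map_zero]
  -- conclusion
  intro ν h
  funext x
  rw [scwPhi_eq τ _ h x, hall ν]
  rfl
end
end
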